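/- Wronskian representation of the first integrals: Let u, ψ, φ : ℝ → ℝ be twice differentiable functions of x and λ a real number such that ψ″ = −(u + λ)ψ and φ″ = −(u + λ)φ. Set Y := ψφ. Then 2Y Y″ − (Y′)² + 4(λ + u) Y² = −(ψφ′ − ψ′φ)². In particular, since the Wronskian ψφ′ − ψ′φ of two solutions of the same Schrödinger equation is constant, the left-hand side is a constant function of x. -/

import Mathlib

/-- The quadratic expression `2 Y Y'' - (Y')² + 4 (λ + u) Y²` built from a
function `Y` of one real variable. -/
noncomputable def quadExpr (lam : ℝ) (u Y : ℝ → ℝ) (x : ℝ) : ℝ :=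
  2 * Y x * deriv (deriv Y) x - (deriv Y x) ^ 2 + 4 * (lam + u x) * (Y x) ^ 2

/-- Wronskian representation of the first integrals: if `ψ'' = -(u + λ)ψ` and
`φ'' = -(u + λ)φ`, then for `Y = ψφ` one has
`2 Y Y'' - (Y')² + 4(λ + u)Y² = -(ψφ' - ψ'φ)²`; in particular the left-hand
side is a constant function of `x`. -/
theorem wronskian_representation (u ψ φ : ℝ → ℝ) (lam : ℝ)
    (hu : ∀ x, DifferentiableAt ℝ u x ∧ DifferentiableAt ℝ (deriv u) x)
    (hψ : ∀ x, DifferentiableAt ℝ ψ x ∧ DifferentiableAt ℝ (deriv ψ) x)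
    (hφ : ∀ x, DifferentiableAt ℝ φ x ∧ DifferentiableAt ℝ (deriv φ) x)
    (hψeq : ∀ x, deriv (deriv ψ) x = -(u x + lam) * ψ x)
    (hφeq : ∀ x, deriv (deriv φ) x = -(u x + lam) * φ x) :
    (∀ x, quadExpr lam u (fun x => ψ x * φ x) x
        = -(ψ x * deriv φ x - deriv ψ x * φ x) ^ 2) ∧
    (∀ x₁ x₂, quadExpr lam u (fun x => ψ x * φ x) x₁
        = quadExpr lam u (fun x => ψ x * φ x) x₂) := by
  have hY1 : deriv (fun x => ψ x * φ x) = fun x => deriv ψ x * φ x + ψ x * deriv φ x := by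
    funext x
    exact deriv_mul (hψ x).1 (hφ x).1
  have hY2 : ∀ x, deriv (deriv (fun x => ψ x * φ x)) x
      = deriv (deriv ψ) x * φ x + 2 * deriv ψ x * deriv φ x + ψ x * deriv (deriv φ) x := by
    intro x
    rw [hY1]
    have h1 : DifferentiableAt ℝ (fun x => deriv ψ x * φ x) x :=
      ((hψ x).2.mul (hφ x).1)
    have h2 : DifferentiableAt ℝ (fun x => ψ x * deriv φ x) x :=
      ((hψ x).1.mul (hφ x).2)
    rw [deriv_fun_add h1 h2, deriv_fun_mul (hψ x).2 (hφ x).1, deriv_fun_mul (hψ x).1 (hφ x).2]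
    ring
  have key : ∀ x, quadExpr lam u (fun x => ψ x * φ x) x
      = -(ψ x * deriv φ x - deriv ψ x * φ x) ^ 2 := by
    intro x
    rw [quadExpr, hY2 x, hψeq, hφeq, hY1]
    ring
  refine ⟨key, fun x₁ x₂ => ?_⟩
  have hW : ∀ x, (fun x => ψ x * deriv φ x - deriv ψ x * φ x) x₁
      = (fun x => ψ x * deriv φ x - deriv ψ x * φ x) x := by
    intro x
    apply Eq.symm
    apply Eq.symm
    have := is_const_of_deriv_eq_zero (f := fun x => ψ x * deriv φ x - deriv ψ x * φ x)
      (fun y => ((hψ y).1.mul (hφ y).2).sub ((hψ y).2.mul (hφ y).1)) ?_ x x₁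
    · exact this.symm
    · intro y
      rw [deriv_fun_sub (f := fun x => ψ x * deriv φ x) (g := fun x => deriv ψ x * φ x) ((hψ y).1.mul (hφ y).2) ((hψ y).2.mul (hφ y).1),
        deriv_fun_mul (hψ y).1 (hφ y).2, deriv_fun_mul (hψ y).2 (hφ y).1, hψeq, hφeq]
      ring
  rw [key x₁, key x₂]
  congr 2
  exact hW x₂
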